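/- Let A ∈ ℝ^{n×n}, C ∈ ℝ^{p×n}, and S ⊆ ℝ^n a subspace that is (C,A)-invariant, i.e., A(S ∩ ker C) ⊆ S. Then the orthogonal complement S^⊥ is (Aᵀ, Cᵀ)-controlled invariant, i.e., Aᵀ S^⊥ ⊆ S^⊥ + Im Cᵀ. -/

import Mathlib

open Matrix Submodule

/-- Duality: if `S` is `(C,A)`-invariant, i.e. `A(S ∩ ker C) ⊆ S`, then `S^⊥` is
`(Aᵀ,Cᵀ)`-controlled invariant, i.e. `Aᵀ S^⊥ ⊆ S^⊥ + Im Cᵀ`. -/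
theorem conditioned_invariant_dual {n p : ℕ}
    (A : Matrix (Fin n) (Fin n) ℝ) (C : Matrix (Fin p) (Fin n) ℝ)
    (S : Submodule ℝ (EuclideanSpace ℝ (Fin n)))
    (hS : (S ⊓ LinearMap.ker (Matrix.toEuclideanLin C)).map (Matrix.toEuclideanLin A) ≤ S) :
    Sᗮ.map (Matrix.toEuclideanLin Aᵀ) ≤ Sᗮ ⊔ LinearMap.range (Matrix.toEuclideanLin Cᵀ) := by
  have hAt : Matrix.toEuclideanLin Aᵀ = LinearMap.adjoint (Matrix.toEuclideanLin A) := by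
    rw [← Matrix.toEuclideanLin_conjTranspose_eq_adjoint, Matrix.conjTranspose_eq_transpose_of_trivial]
  have hCt : Matrix.toEuclideanLin Cᵀ = LinearMap.adjoint (Matrix.toEuclideanLin C) := by
    rw [← Matrix.toEuclideanLin_conjTranspose_eq_adjoint, Matrix.conjTranspose_eq_transpose_of_trivial]
  -- range Cᵀ orthogonal = ker C
  have hker : (LinearMap.range (Matrix.toEuclideanLin Cᵀ))ᗮ
      = LinearMap.ker (Matrix.toEuclideanLin C) := by
    ext x
    simp only [Submodule.mem_orthogonal, LinearMap.mem_range, LinearMap.mem_ker,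
      forall_exists_index]
    constructor
    · intro h
      have h2 : ∀ y, (inner ℝ y (Matrix.toEuclideanLin C x) : ℝ) = 0 := by
        intro y
        have := h (Matrix.toEuclideanLin Cᵀ y) y rfl
        rwa [hCt, LinearMap.adjoint_inner_left] at this
      exact inner_self_eq_zero.mp (h2 _)
    · intro h u y hy
      subst hy
      rw [hCt, LinearMap.adjoint_inner_left, h, inner_zero_right]
  -- map Aᵀ Sᗮ ≤ (S ⊓ ker C)ᗮ
  have h1 : Sᗮ.map (Matrix.toEuclideanLin Aᵀ) ≤ (S ⊓ LinearMap.ker (Matrix.toEuclideanLin C))ᗮ := by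
    rintro _ ⟨x, hx, rfl⟩
    intro y hy
    rw [hAt, LinearMap.adjoint_inner_right]
    exact hx _ (hS ⟨y, hy, rfl⟩)
  refine le_trans h1 ?_
  have h2 : (S ⊓ LinearMap.ker (Matrix.toEuclideanLin C))ᗮ
      = Sᗮ ⊔ LinearMap.range (Matrix.toEuclideanLin Cᵀ) := by
    conv_lhs => rw [← hker, ← Submodule.orthogonal_orthogonal S, Submodule.inf_orthogonal,
      Submodule.orthogonal_orthogonal]
  rw [h2]
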